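/- For an invertible bounded operator S on a complex Hilbert space and any bounded operator X, ‖S* X S⁻¹ + S⁻¹ X S*‖ ≥ 2‖X‖. -/

import Mathlib

open ContinuousLinearMap
open scoped InnerProductSpace

open Complex NormedSpace in
private lemma norm_exp_le_exp_norm' {A : Type*} [NormedRing A] [NormOneClass A]
    [NormedAlgebra ℂ A] [CompleteSpace A] (a : A) :
    ‖NormedSpace.exp a‖ ≤ Real.exp ‖a‖ := by
  rw [NormedSpace.exp_eq_tsum ℂ, Real.exp_eq_exp_ℝ, NormedSpace.exp_eq_tsum ℝ]
  have h1 : Summable fun n : ℕ => ‖((n.factorial : ℂ))⁻¹ • a ^ n‖ :=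
    NormedSpace.norm_expSeries_summable' (𝕂 := ℂ) a
  have h2 : Summable fun n : ℕ => ((n.factorial : ℝ))⁻¹ • ‖a‖ ^ n :=
    NormedSpace.expSeries_summable' (𝕂 := ℝ) ‖a‖
  refine (norm_tsum_le_tsum_norm h1).trans ?_
  refine Summable.tsum_le_tsum (fun n => ?_) h1 h2
  rw [norm_smul, smul_eq_mul]
  have e1 : ‖((n.factorial : ℂ))⁻¹‖ = ((n.factorial : ℝ))⁻¹ := by
    rw [norm_inv]; simp
  rw [e1]
  have h3 : (0:ℝ) ≤ ((n.factorial : ℝ))⁻¹ := by positivity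
  exact mul_le_mul_of_nonneg_left (norm_pow_le a n) h3

open Complex in
private lemma strip_bound {f : ℂ → ℂ} {C M : ℝ} (hf : Differentiable ℂ f)
    (hC : ∀ z : ℂ, |z.re| ≤ 1 → ‖f z‖ ≤ C)
    (hM : ∀ t : ℝ, ‖f (1 + (t : ℂ) * I) + f (-1 + (t : ℂ) * I)‖ ≤ M) :
    ‖f 0‖ ≤ M / 2 := by
  have hπ : (0:ℝ) < Real.pi := Real.pi_pos
  set ψ : ℂ → ℂ := fun w =>
    ((2 / Real.pi : ℝ) : ℂ) * (-I * (Complex.log (1 + w) - Complex.log (1 - w))) with hψ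
  have hψre : ∀ w : ℂ,
      (ψ w).re = (2 / Real.pi) * (Complex.log (1 + w) - Complex.log (1 - w)).im := by
    intro w
    rw [hψ]; simp only
    rw [Complex.re_ofReal_mul]
    congr 1
    simp [Complex.mul_re]
  have hlogim : ∀ w : ℂ, 0 < (1 + w).re → 0 < (1 - w).re →
      (Complex.log (1 + w) - Complex.log (1 - w)).im = ((1 + w) / (1 - w)).arg := by
    intro w h1 h2
    have hne1 : (1 : ℂ) + w ≠ 0 := fun h => by rw [h] at h1; simp at h1
    have hne2 : (1 : ℂ) - w ≠ 0 := fun h => by rw [h] at h2; simp at h2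
    have ha1 : |(1 + w).arg| < Real.pi / 2 := Complex.abs_arg_lt_pi_div_two_iff.mpr (Or.inl h1)
    have ha2 : |(1 - w).arg| < Real.pi / 2 := Complex.abs_arg_lt_pi_div_two_iff.mpr (Or.inl h2)
    have him : (Complex.log (1 + w) - Complex.log (1 - w)).im = (1 + w).arg - (1 - w).arg := by
      simp [Complex.sub_im, Complex.log_im]
    have hexp : Complex.exp (Complex.log (1 + w) - Complex.log (1 - w)) = (1 + w) / (1 - w) := by
      rw [Complex.exp_sub, Complex.exp_log hne1, Complex.exp_log hne2]
    have habs1 := abs_lt.mp ha1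
    have habs2 := abs_lt.mp ha2
    have hlog := Complex.log_exp (x := Complex.log (1 + w) - Complex.log (1 - w))
      (by rw [him]; linarith) (by rw [him]; linarith)
    rw [hexp] at hlog
    rw [← Complex.log_im, hlog]
  have hmemball : ∀ w : ℂ, ‖w‖ < 1 → 0 < (1 + w).re ∧ 0 < (1 - w).re := by
    intro w hw
    have h1 : |w.re| ≤ ‖w‖ := Complex.abs_re_le_norm w
    have := abs_lt.mp (lt_of_le_of_lt h1 hw)
    constructor
    · simp only [Complex.add_re, Complex.one_re]; linarith [this.1]
    · simp only [Complex.sub_re, Complex.one_re]; linarith [this.2]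
  have hratio : ∀ w : ℂ, (1:ℂ) - w ≠ 0 →
      ((1 + w) / (1 - w)).re = (1 - Complex.normSq w) / Complex.normSq (1 - w) ∧
      ((1 + w) / (1 - w)).im = (2 * w.im) / Complex.normSq (1 - w) := by
    intro w hne
    constructor
    · rw [Complex.div_re, ← add_div]
      congr 1
      simp [Complex.normSq_apply, Complex.add_re, Complex.add_im, Complex.sub_re,
        Complex.sub_im, Complex.one_re, Complex.one_im]
      ring
    · rw [Complex.div_im, ← sub_div]
      congr 1
      simp [Complex.add_re, Complex.add_im, Complex.sub_re, Complex.sub_im,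
        Complex.one_re, Complex.one_im]
      ring
  have hupos : ∀ w : ℂ, ‖w‖ < 1 → 0 < ((1 + w) / (1 - w)).re := by
    intro w hw
    have hne2 : (1:ℂ) - w ≠ 0 := fun h => by
      obtain ⟨_, h2⟩ := hmemball w hw
      rw [h] at h2; simp at h2
    rw [(hratio w hne2).1]
    apply div_pos
    · have : Complex.normSq w < 1 := by
        rw [← Complex.sq_norm]
        nlinarith [norm_nonneg w]
      linarith
    · exact Complex.normSq_pos.mpr hne2
  have hψre_lt : ∀ w : ℂ, ‖w‖ < 1 → |(ψ w).re| < 1 := by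
    intro w hw
    obtain ⟨h1, h2⟩ := hmemball w hw
    rw [hψre, hlogim w h1 h2]
    have harg : |((1 + w) / (1 - w)).arg| < Real.pi / 2 :=
      Complex.abs_arg_lt_pi_div_two_iff.mpr (Or.inl (hupos w hw))
    rw [abs_mul, abs_of_pos (by positivity : (0:ℝ) < 2 / Real.pi)]
    calc (2/Real.pi) * |((1 + w) / (1 - w)).arg| < (2/Real.pi) * (Real.pi/2) :=
          mul_lt_mul_of_pos_left harg (by positivity)
    _ = 1 := by field_simp
  have hψdiff : ∀ w : ℂ, 0 < (1 + w).re → 0 < (1 - w).re → DifferentiableAt ℂ ψ w := by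
    intro w h1 h2
    have d1 : DifferentiableAt ℂ (fun w : ℂ => Complex.log (1 + w)) w :=
      DifferentiableAt.clog (differentiableAt_id.const_add 1)
        (Complex.mem_slitPlane_iff.mpr (Or.inl h1))
    have d2 : DifferentiableAt ℂ (fun w : ℂ => Complex.log (1 - w)) w :=
      DifferentiableAt.clog ((differentiableAt_const 1).sub differentiableAt_id)
        (Complex.mem_slitPlane_iff.mpr (Or.inl h2))
    exact ((d1.sub d2).const_mul _).const_mul _
  have hψconj : ∀ w : ℂ, 0 < (1 + w).re → 0 < (1 - w).re →
      ψ ((starRingEnd ℂ) w) = -((starRingEnd ℂ) (ψ w)) := by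
    intro w h1 h2
    have harg1 : (1 + w).arg ≠ Real.pi := by
      intro h
      have := Complex.arg_eq_pi_iff.mp h
      linarith [this.1]
    have harg2 : (1 - w).arg ≠ Real.pi := by
      intro h
      have := Complex.arg_eq_pi_iff.mp h
      linarith [this.1]
    rw [hψ]; simp only
    have e1 : (1 : ℂ) + (starRingEnd ℂ) w = (starRingEnd ℂ) (1 + w) := by
      rw [map_add, map_one]
    have e2 : (1 : ℂ) - (starRingEnd ℂ) w = (starRingEnd ℂ) (1 - w) := by
      rw [map_sub, map_one]
    rw [e1, e2, Complex.log_conj _ harg1, Complex.log_conj _ harg2]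
    simp only [map_mul, map_sub, map_neg, Complex.conj_I, Complex.conj_ofReal]
    ring
  have hbdry : ∀ θ : ℝ, 0 < θ → θ < Real.pi →
      0 < (1 + Complex.exp ((θ:ℂ) * I)).re ∧ 0 < (1 - Complex.exp ((θ:ℂ) * I)).re ∧
        (ψ (Complex.exp ((θ:ℂ) * I))).re = 1 := by
    intro θ h0 hθπ
    have hsin : 0 < Real.sin θ := Real.sin_pos_of_pos_of_lt_pi h0 hθπ
    have hpyth := Real.sin_sq_add_cos_sq θ
    have hcos1 : Real.cos θ < 1 := by nlinarith
    have hcos2 : -1 < Real.cos θ := by nlinarith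
    have hre : (Complex.exp ((θ:ℂ) * I)).re = Real.cos θ := Complex.exp_ofReal_mul_I_re θ
    have him : (Complex.exp ((θ:ℂ) * I)).im = Real.sin θ := Complex.exp_ofReal_mul_I_im θ
    have h1 : 0 < (1 + Complex.exp ((θ:ℂ) * I)).re := by
      rw [Complex.add_re, Complex.one_re, hre]; linarith
    have h2 : 0 < (1 - Complex.exp ((θ:ℂ) * I)).re := by
      rw [Complex.sub_re, Complex.one_re, hre]; linarith
    refine ⟨h1, h2, ?_⟩
    have hne2 : (1:ℂ) - Complex.exp ((θ:ℂ)*I) ≠ 0 := fun h => by rw [h] at h2; simp at h2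
    have habs : ‖Complex.exp ((θ:ℂ)*I)‖ = 1 := Complex.norm_exp_ofReal_mul_I θ
    have hnsq : Complex.normSq (Complex.exp ((θ:ℂ)*I)) = 1 := by
      rw [← Complex.sq_norm, habs]; norm_num
    obtain ⟨hr', hi'⟩ := hratio (Complex.exp ((θ:ℂ)*I)) hne2
    have hure : ((1 + Complex.exp ((θ:ℂ)*I))/(1 - Complex.exp ((θ:ℂ)*I))).re = 0 := by
      rw [hr', hnsq]; simp
    have huim : 0 < ((1 + Complex.exp ((θ:ℂ)*I))/(1 - Complex.exp ((θ:ℂ)*I))).im := by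
      rw [hi', him]
      have := Complex.normSq_pos.mpr hne2
      positivity
    have harg : ((1 + Complex.exp ((θ:ℂ)*I))/(1 - Complex.exp ((θ:ℂ)*I))).arg = Real.pi / 2 :=
      Complex.arg_eq_pi_div_two_iff.mpr ⟨hure, huim⟩
    rw [hψre, hlogim _ h1 h2, harg]
    field_simp
  -- radii sequence
  set r : ℕ → ℝ := fun n => 1 - 1 / ((n:ℝ) + 2) with hrdef
  have hr0 : ∀ n, 0 < r n := by
    intro n
    rw [hrdef]; simp only
    have hn : (0:ℝ) ≤ (n:ℝ) := Nat.cast_nonneg n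
    have h2 : (2:ℝ) ≤ (n:ℝ) + 2 := by linarith
    have : 1 / ((n:ℝ) + 2) ≤ 1/2 := by
      apply one_div_le_one_div_of_le <;> linarith
    linarith
  have hr1 : ∀ n, r n < 1 := by
    intro n
    rw [hrdef]; simp only
    have hn : (0:ℝ) ≤ (n:ℝ) := Nat.cast_nonneg n
    have : 0 < 1 / ((n:ℝ) + 2) := by positivity
    linarith
  have hrlim : Filter.Tendsto r Filter.atTop (nhds 1) := by
    rw [hrdef]
    have h1 : Filter.Tendsto (fun n : ℕ => ((n:ℝ) + 2)) Filter.atTop Filter.atTop :=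
      Filter.tendsto_atTop_add_const_right _ 2 tendsto_natCast_atTop_atTop
    have h2 : Filter.Tendsto (fun n : ℕ => 1 / ((n:ℝ) + 2)) Filter.atTop (nhds 0) := by
      simpa [one_div, Pi.inv_def] using h1.inv_tendsto_atTop
    have := Filter.Tendsto.sub (tendsto_const_nhds (x := (1:ℝ)) (f := Filter.atTop)) h2
    simpa using this
  -- continuity in θ
  have hgcont : ∀ ρ : ℝ, 0 < ρ → ρ < 1 →
      Continuous (fun θ : ℝ => f (ψ (circleMap 0 ρ θ))) := by
    intro ρ hρ0 hρ1
    rw [continuous_iff_continuousAt]; intro θ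
    have hw : ‖circleMap 0 ρ θ‖ < 1 := by
      rw [norm_circleMap_zero, abs_of_pos hρ0]; exact hρ1
    obtain ⟨h1, h2⟩ := hmemball _ hw
    exact ((hf _).continuousAt.comp (hψdiff _ h1 h2).continuousAt).comp
      (continuous_circleMap 0 ρ).continuousAt
  -- mean value property
  have hmean : ∀ ρ : ℝ, 0 < ρ → ρ < 1 →
      ∫ θ in (0:ℝ)..2*Real.pi, f (ψ (circleMap 0 ρ θ)) = ((2*Real.pi:ℝ):ℂ) * f 0 := by
    intro ρ hρ0 hρ1
    have hdc : DiffContOnCl ℂ (f ∘ ψ) (Metric.ball 0 ρ) := by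
      apply DifferentiableOn.diffContOnCl
      rw [closure_ball (0:ℂ) (ne_of_gt hρ0)]
      intro w hw
      have hw' : ‖w‖ < 1 := by
        have hh : ‖w‖ ≤ ρ := by simpa using hw
        calc ‖w‖ = ‖w‖ := rfl
        _ ≤ ρ := hh
        _ < 1 := hρ1
      obtain ⟨h1, h2⟩ := hmemball w hw'
      exact ((hf _).comp w (hψdiff w h1 h2)).differentiableWithinAt
    have h0mem : (0:ℂ) ∈ Metric.ball (0:ℂ) ρ := by simp [hρ0]
    have hcauchy := hdc.circleIntegral_sub_inv_smul h0mem
    simp only [sub_zero] at hcauchy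
    unfold circleIntegral at hcauchy
    simp only [deriv_circleMap, smul_eq_mul] at hcauchy
    have hψ0 : ψ 0 = 0 := by rw [hψ]; simp
    have hsimp : Set.EqOn (fun θ : ℝ => circleMap 0 ρ θ * I * ((circleMap 0 ρ θ)⁻¹ * (f ∘ ψ) (circleMap 0 ρ θ)))
        (fun θ : ℝ => I * f (ψ (circleMap 0 ρ θ))) (Set.uIcc 0 (2*Real.pi)) := by
      intro θ _
      have hne : circleMap 0 ρ θ ≠ 0 := by
        intro h
        have := norm_circleMap_zero ρ θ
        rw [h, abs_of_pos hρ0] at this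
        simp at this
        linarith
      simp only [Function.comp_apply]
      field_simp
    rw [intervalIntegral.integral_congr hsimp, intervalIntegral.integral_const_mul] at hcauchy
    apply mul_left_cancel₀ Complex.I_ne_zero
    rw [hcauchy]
    simp only [Function.comp_apply, hψ0]
    push_cast
    ring
  -- folding
  have hfold : ∀ ρ : ℝ, 0 < ρ → ρ < 1 →
      ∫ θ in (0:ℝ)..Real.pi,
        (f (ψ (circleMap 0 ρ θ)) + f (ψ (circleMap 0 ρ (-θ)))) = ((2*Real.pi:ℝ):ℂ) * f 0 := by
    intro ρ hρ0 hρ1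
    have hcont := hgcont ρ hρ0 hρ1
    have hint : ∀ a b : ℝ, IntervalIntegrable (fun θ : ℝ => f (ψ (circleMap 0 ρ θ)))
        MeasureTheory.volume a b := fun a b => hcont.intervalIntegrable a b
    have hintneg : IntervalIntegrable (fun θ : ℝ => f (ψ (circleMap 0 ρ (-θ))))
        MeasureTheory.volume 0 Real.pi := (hcont.comp continuous_neg).intervalIntegrable 0 Real.pi
    have hper : Function.Periodic (fun θ : ℝ => f (ψ (circleMap 0 ρ θ))) (2*Real.pi) :=
      (periodic_circleMap 0 ρ).comp (fun z => f (ψ z))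
    have e1 : ∫ θ in (0:ℝ)..2*Real.pi, f (ψ (circleMap 0 ρ θ))
        = ∫ θ in (-Real.pi)..Real.pi, f (ψ (circleMap 0 ρ θ)) := by
      have h := hper.intervalIntegral_add_eq 0 (-Real.pi)
      rw [zero_add] at h
      rw [h]
      congr 1
      ring
    have e2 : ∫ θ in (0:ℝ)..Real.pi, f (ψ (circleMap 0 ρ (-θ)))
        = ∫ θ in (-Real.pi)..(0:ℝ), f (ψ (circleMap 0 ρ θ)) := by
      rw [intervalIntegral.integral_comp_neg (fun θ => f (ψ (circleMap 0 ρ θ)))]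
      norm_num
    calc ∫ θ in (0:ℝ)..Real.pi, (f (ψ (circleMap 0 ρ θ)) + f (ψ (circleMap 0 ρ (-θ))))
        = (∫ θ in (0:ℝ)..Real.pi, f (ψ (circleMap 0 ρ θ)))
          + ∫ θ in (0:ℝ)..Real.pi, f (ψ (circleMap 0 ρ (-θ))) :=
          intervalIntegral.integral_add (hint 0 Real.pi) hintneg
    _ = (∫ θ in (-Real.pi)..(0:ℝ), f (ψ (circleMap 0 ρ θ)))
          + ∫ θ in (0:ℝ)..Real.pi, f (ψ (circleMap 0 ρ θ)) := by rw [e2]; ring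
    _ = ∫ θ in (-Real.pi)..Real.pi, f (ψ (circleMap 0 ρ θ)) :=
          intervalIntegral.integral_add_adjacent_intervals (hint _ _) (hint _ _)
    _ = ∫ θ in (0:ℝ)..2*Real.pi, f (ψ (circleMap 0 ρ θ)) := e1.symm
    _ = ((2*Real.pi:ℝ):ℂ) * f 0 := hmean ρ hρ0 hρ1
    -- limit function
  set s : ℝ → ℝ := fun θ => (ψ (Complex.exp ((θ:ℂ)*I))).im with hs
  set glim : ℝ → ℝ := fun θ => ‖f (1 + (s θ : ℂ)*I) + f (-1 + (s θ : ℂ)*I)‖ with hglim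
  have hC0 : 0 ≤ C := le_trans (norm_nonneg _) (hC 0 (by norm_num))
  have hM0 : 0 ≤ M := le_trans (norm_nonneg _) (hM 0)
  set F : ℕ → ℝ → ℝ := fun n θ =>
    ‖f (ψ (circleMap 0 (r n) θ)) + f (ψ (circleMap 0 (r n) (-θ)))‖ with hF
  have hFcont : ∀ n, Continuous (F n) := fun n =>
    ((hgcont _ (hr0 n) (hr1 n)).add ((hgcont _ (hr0 n) (hr1 n)).comp continuous_neg)).norm
  have hbound : ∀ n θ, ‖F n θ‖ ≤ 2*C := by
    intro n θ
    rw [Real.norm_eq_abs, _root_.abs_of_nonneg (norm_nonneg _)]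
    have hb : ∀ θ' : ℝ, ‖f (ψ (circleMap 0 (r n) θ'))‖ ≤ C := by
      intro θ'
      apply hC
      have hw : ‖circleMap 0 (r n) θ'‖ < 1 := by
        rw [norm_circleMap_zero, abs_of_pos (hr0 n)]; exact hr1 n
      exact le_of_lt (hψre_lt _ hw)
    calc ‖f (ψ (circleMap 0 (r n) θ)) + f (ψ (circleMap 0 (r n) (-θ)))‖
        ≤ ‖f (ψ (circleMap 0 (r n) θ))‖ + ‖f (ψ (circleMap 0 (r n) (-θ)))‖ := norm_add_le _ _
    _ ≤ C + C := add_le_add (hb θ) (hb (-θ))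
    _ = 2*C := by ring
  have hlimpt : ∀ θ : ℝ, 0 < θ → θ < Real.pi →
      Filter.Tendsto (fun n => F n θ) Filter.atTop (nhds (glim θ)) := by
    intro θ h0 hθπ
    obtain ⟨h1, h2, hre1⟩ := hbdry θ h0 hθπ
    set w : ℂ := Complex.exp ((θ:ℂ)*I) with hw
    have hcw : ContinuousAt (fun z => f (ψ z)) w :=
      (hf _).continuousAt.comp (hψdiff w h1 h2).continuousAt
    have h1c : 0 < (1 + (starRingEnd ℂ) w).re := by
      have : (1 + (starRingEnd ℂ) w).re = (1 + w).re := by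
        simp [Complex.add_re, Complex.conj_re]
      rw [this]; exact h1
    have h2c : 0 < (1 - (starRingEnd ℂ) w).re := by
      have : (1 - (starRingEnd ℂ) w).re = (1 - w).re := by
        simp [Complex.sub_re, Complex.conj_re]
      rw [this]; exact h2
    have hcwc : ContinuousAt (fun z => f (ψ z)) ((starRingEnd ℂ) w) :=
      (hf _).continuousAt.comp (hψdiff _ h1c h2c).continuousAt
    have hmap1 : ∀ ρ : ℝ, circleMap 0 ρ θ = (ρ:ℂ) * w := by
      intro ρ; simp [circleMap, hw]
    have hmap2 : ∀ ρ : ℝ, circleMap 0 ρ (-θ) = (ρ:ℂ) * (starRingEnd ℂ) w := by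
      intro ρ
      simp only [circleMap, zero_add, hw]
      congr 1
      rw [← Complex.exp_conj]
      congr 1
      simp [Complex.conj_I, Complex.conj_ofReal]
    have hrc : Filter.Tendsto (fun n => ((r n : ℝ) : ℂ)) Filter.atTop (nhds 1) := by
      have := (Complex.continuous_ofReal.tendsto 1).comp hrlim
      simpa [Function.comp_def] using this
    have ht1 : Filter.Tendsto (fun n => circleMap 0 (r n) θ) Filter.atTop (nhds w) := by
      simp only [hmap1]
      have := hrc.mul_const w
      simpa using this
    have ht2 : Filter.Tendsto (fun n => circleMap 0 (r n) (-θ)) Filter.atTop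
        (nhds ((starRingEnd ℂ) w)) := by
      simp only [hmap2]
      have := hrc.mul_const ((starRingEnd ℂ) w)
      simpa using this
    have hψw : ψ w = 1 + ((s θ : ℝ):ℂ)*I := by
      rw [hs]; simp only
      conv_lhs => rw [← Complex.re_add_im (ψ w)]
      rw [hre1, hw]
      push_cast
      ring
    have hψwc : ψ ((starRingEnd ℂ) w) = -1 + ((s θ : ℝ):ℂ)*I := by
      rw [hψconj w h1 h2, hψw]
      simp only [map_add, map_mul, map_one, Complex.conj_I, Complex.conj_ofReal]
      ring
    have hval : f (ψ w) + f (ψ ((starRingEnd ℂ) w)) = f (1 + ((s θ:ℝ):ℂ)*I) + f (-1 + ((s θ:ℝ):ℂ)*I) := by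
      rw [hψw, hψwc]
    rw [hglim]; simp only
    rw [← hval]
    exact ((hcw.tendsto.comp ht1).add (hcwc.tendsto.comp ht2)).norm
  have haeπ : ∀ᵐ (θ : ℝ), θ ≠ Real.pi := by
    have h0 : MeasureTheory.volume ({Real.pi} : Set ℝ) = 0 := MeasureTheory.measure_singleton _
    have := MeasureTheory.measure_eq_zero_iff_ae_notMem.mp h0
    filter_upwards [this] with θ hθ
    simpa using hθ
  have haelim : ∀ᵐ (θ : ℝ), θ ∈ Set.uIoc (0:ℝ) Real.pi →
      Filter.Tendsto (fun n => F n θ) Filter.atTop (nhds (glim θ)) := by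
    filter_upwards [haeπ] with θ hθ hmem
    rw [Set.uIoc_of_le (le_of_lt hπ)] at hmem
    exact hlimpt θ hmem.1 (lt_of_le_of_ne hmem.2 hθ)
  have hDCT : Filter.Tendsto (fun n => ∫ θ in (0:ℝ)..Real.pi, F n θ) Filter.atTop
      (nhds (∫ θ in (0:ℝ)..Real.pi, glim θ)) := by
    apply intervalIntegral.tendsto_integral_filter_of_dominated_convergence (fun _ => 2*C)
    · exact Filter.Eventually.of_forall (fun n => (hFcont n).aestronglyMeasurable)
    · exact Filter.Eventually.of_forall
        (fun n => MeasureTheory.ae_of_all _ (fun θ _ => hbound n θ))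
    · exact intervalIntegrable_const
    · exact haelim
  have hlower : ∀ n, 2*Real.pi*‖f 0‖ ≤ ∫ θ in (0:ℝ)..Real.pi, F n θ := by
    intro n
    have hfd := hfold (r n) (hr0 n) (hr1 n)
    have hnorm : ‖((2*Real.pi:ℝ):ℂ) * f 0‖ = 2*Real.pi*‖f 0‖ := by
      rw [norm_mul, Complex.norm_real, Real.norm_eq_abs, abs_of_pos (by linarith : (0:ℝ) < 2*Real.pi)]
    calc 2*Real.pi*‖f 0‖ = ‖((2*Real.pi:ℝ):ℂ) * f 0‖ := hnorm.symm
    _ = ‖∫ θ in (0:ℝ)..Real.pi,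
          (f (ψ (circleMap 0 (r n) θ)) + f (ψ (circleMap 0 (r n) (-θ))))‖ := by rw [hfd]
    _ ≤ ∫ θ in (0:ℝ)..Real.pi, F n θ :=
          intervalIntegral.norm_integral_le_integral_norm (le_of_lt hπ)
  have hlim_lower : 2*Real.pi*‖f 0‖ ≤ ∫ θ in (0:ℝ)..Real.pi, glim θ :=
    ge_of_tendsto' hDCT hlower
  have hglim_meas : MeasureTheory.AEStronglyMeasurable glim
      (MeasureTheory.volume.restrict (Set.uIoc (0:ℝ) Real.pi)) := by
    apply aestronglyMeasurable_of_tendsto_ae Filter.atTop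
      (fun n => ((hFcont n).aestronglyMeasurable))
    rw [MeasureTheory.ae_restrict_iff' measurableSet_uIoc]
    exact haelim
  have hglim_int : IntervalIntegrable glim MeasureTheory.volume 0 Real.pi := by
    apply IntervalIntegrable.mono_fun (intervalIntegrable_const (c := M)) hglim_meas
    apply MeasureTheory.ae_of_all
    intro θ
    show ‖glim θ‖ ≤ |M|
    rw [Real.norm_eq_abs, _root_.abs_of_nonneg (norm_nonneg _), _root_.abs_of_nonneg hM0]
    exact hM (s θ)
  have hupper : ∫ θ in (0:ℝ)..Real.pi, glim θ ≤ Real.pi * M := by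
    calc ∫ θ in (0:ℝ)..Real.pi, glim θ ≤ ∫ _θ in (0:ℝ)..Real.pi, M :=
          intervalIntegral.integral_mono_on (le_of_lt hπ) hglim_int intervalIntegrable_const
            (fun θ _ => hM (s θ))
    _ = Real.pi * M := by simp
  nlinarith [hlim_lower, hupper]

variable {H : Type*} [NormedAddCommGroup H] [InnerProductSpace ℂ H] [CompleteSpace H]

set_option maxHeartbeats 1000000 in
open Complex in
theorem stmt3 (S : (H →L[ℂ] H)ˣ) (X : H →L[ℂ] H) :
    2 * ‖X‖ ≤ ‖adjoint (S : H →L[ℂ] H) * X * (↑S⁻¹ : H →L[ℂ] H) +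
        (↑S⁻¹ : H →L[ℂ] H) * X * adjoint (S : H →L[ℂ] H)‖ := by
  rcases subsingleton_or_nontrivial H with hH | hH
  · have hX : X = 0 := by ext x; exact Subsingleton.elim _ _
    simp [hX]
  simp only [← ContinuousLinearMap.star_eq_adjoint]
  haveI : Nontrivial (H →L[ℂ] H) := by
    obtain ⟨x, hx⟩ := exists_ne (0 : H)
    exact ⟨1, 0, fun h => hx (by simpa using DFunLike.congr_fun h x)⟩
  set A : H →L[ℂ] H := (S : H →L[ℂ] H) with hA
  set Sst : (H →L[ℂ] H)ˣ := ⟨star A, star ((↑S⁻¹ : H →L[ℂ] H)),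
    by rw [← star_mul, Units.inv_mul, star_one],
    by rw [← star_mul, Units.mul_inv, star_one]⟩ with hSst
  set Bu : (H →L[ℂ] H)ˣ := Sst * S with hBu
  set B : H →L[ℂ] H := star A * A with hB
  have hBuB : (Bu : H →L[ℂ] H) = B := rfl
  have hB0 : (0 : H →L[ℂ] H) ≤ B := star_mul_self_nonneg A
  set P : H →L[ℂ] H := CFC.sqrt B with hP
  have hP0 : (0 : H →L[ℂ] H) ≤ P := CFC.sqrt_nonneg B
  have hPsa : IsSelfAdjoint P := IsSelfAdjoint.of_nonneg hP0
  have hPP : P * P = B := by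
    have := CFC.sq_sqrt B hB0
    rwa [sq] at this
  have hPB : Commute P (Bu : H →L[ℂ] H) := by
    rw [hBuB, ← hPP]; exact (Commute.refl P).mul_right (Commute.refl P)
  have hPBinv : Commute P ((Bu⁻¹ : (H →L[ℂ] H)ˣ) : H →L[ℂ] H) := hPB.units_inv_right
  set Pu : (H →L[ℂ] H)ˣ := ⟨P, (↑Bu⁻¹ : H →L[ℂ] H) * P,
    by rw [← mul_assoc, hPBinv.eq, mul_assoc, hPP, ← hBuB, Units.inv_mul],
    by rw [mul_assoc, hPP, ← hBuB, Units.inv_mul]⟩ with hPu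
  have hPuP : (Pu : H →L[ℂ] H) = P := rfl
  have hspec : ∀ x ∈ spectrum ℝ P, 0 < x := by
    intro x hx
    have hx0 : 0 ≤ x := spectrum_nonneg_of_nonneg hP0 hx
    rcases hx0.lt_or_eq with h | h
    · exact h
    · exact absurd (h ▸ hx) ((spectrum.zero_notMem_iff ℝ).mpr Pu.isUnit)
  -- logarithm
  set K : H →L[ℂ] H := CFC.log P with hK
  have hKsa : IsSelfAdjoint K := IsSelfAdjoint.log
  have hexpK : NormedSpace.exp K = P :=
    CFC.exp_log P ((StarOrderedRing.isStrictlyPositive_iff_spectrum_pos (R := ℝ) P hPsa).mpr hspec)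
  set E : ℂ → H →L[ℂ] H := fun z => NormedSpace.exp (z • K) with hE
  have hEadd : ∀ z w : ℂ, E (z + w) = E z * E w := by
    intro z w
    rw [hE]; simp only
    rw [add_smul]
    exact NormedSpace.exp_add_of_commute_of_mem_ball (𝕂 := ℂ) (((Commute.refl K).smul_left z).smul_right w)
      ((NormedSpace.expSeries_radius_eq_top ℂ (H →L[ℂ] H)).symm ▸ edist_lt_top _ _)
      ((NormedSpace.expSeries_radius_eq_top ℂ (H →L[ℂ] H)).symm ▸ edist_lt_top _ _)
  have hE0 : E 0 = 1 := by simp [hE]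
  have hE1 : E 1 = P := by
    rw [hE]; simp only [one_smul]
    exact hexpK
  have hEm1 : E (-1) = (↑Pu⁻¹ : H →L[ℂ] H) := by
    have h1 : E (-1) * P = 1 := by
      rw [← hE1, ← hEadd]; norm_num [hE0]
    calc E (-1) = E (-1) * (P * (↑Pu⁻¹ : H →L[ℂ] H)) := by
          rw [← hPuP, Units.mul_inv, mul_one]
    _ = (E (-1) * P) * (↑Pu⁻¹ : H →L[ℂ] H) := by rw [mul_assoc]
    _ = (↑Pu⁻¹ : H →L[ℂ] H) := by rw [h1, one_mul]
  have hEstar : ∀ z : ℂ, star (E z) = E (starRingEnd ℂ z) := by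
    intro z
    rw [hE]; simp only
    rw [NormedSpace.star_exp, star_smul, hKsa.star_eq]
    rfl
  have hEunit : ∀ t : ℝ, E ((t : ℂ) * I) ∈ unitary (H →L[ℂ] H) := by
    intro t
    have hconj : (starRingEnd ℂ) ((t : ℂ) * I) = -((t : ℂ) * I) := by
      simp [Complex.conj_I]
    rw [Unitary.mem_iff]
    constructor
    · rw [hEstar, hconj, ← hEadd]
      simpa using hE0
    · rw [hEstar, hconj, ← hEadd]
      simpa using hE0
  have hEneg : ∀ t : ℝ, E (-((t:ℂ) * I)) = E (((-t : ℝ) : ℂ) * I) := by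
    intro t; congr 1; push_cast; ring
  -- unitaries U, V
  set Uu : (H →L[ℂ] H)ˣ := S * Pu⁻¹ with hUu
  set Vu : (H →L[ℂ] H)ˣ := Pu⁻¹ * Sst with hVu
  set U : H →L[ℂ] H := (Uu : H →L[ℂ] H) with hU
  set V : H →L[ℂ] H := (Vu : H →L[ℂ] H) with hV
  have hBuPu : Bu = Pu * Pu := by
    apply Units.ext
    show (Bu : H →L[ℂ] H) = P * P
    rw [hBuB, hPP]
  have hUuVu : Uu * Vu = 1 := by
    rw [hUu, hVu]
    have : Pu⁻¹ * Pu⁻¹ = (Pu * Pu)⁻¹ := by rw [mul_inv_rev]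
    calc S * Pu⁻¹ * (Pu⁻¹ * Sst) = S * (Pu⁻¹ * Pu⁻¹) * Sst := by group
    _ = S * Bu⁻¹ * Sst := by rw [this, ← hBuPu]
    _ = 1 := by rw [hBu]; group
  have hVuUu : Vu * Uu = 1 := by
    rw [hVu, hUu]
    calc Pu⁻¹ * Sst * (S * Pu⁻¹) = Pu⁻¹ * (Sst * S) * Pu⁻¹ := by group
    _ = Pu⁻¹ * Bu * Pu⁻¹ := by rw [hBu]
    _ = 1 := by rw [hBuPu]; group
  have hUV1 : U * V = 1 := by
    rw [hU, hV, ← Units.val_mul, hUuVu, Units.val_one]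
  have hVU1 : V * U = 1 := by
    rw [hU, hV, ← Units.val_mul, hVuUu, Units.val_one]
  have hstarPinv : star (↑Pu⁻¹ : H →L[ℂ] H) = (↑Pu⁻¹ : H →L[ℂ] H) := by
    have h1 : P * star (↑Pu⁻¹ : H →L[ℂ] H) = 1 := by
      calc P * star (↑Pu⁻¹ : H →L[ℂ] H) = star ((↑Pu⁻¹ : H →L[ℂ] H) * P) := by
            rw [star_mul, hPsa.star_eq]
      _ = 1 := by rw [show (↑Pu⁻¹ : H →L[ℂ] H) * P = 1 from by rw [← hPuP, Units.inv_mul],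
            star_one]
    calc star (↑Pu⁻¹ : H →L[ℂ] H)
        = ((↑Pu⁻¹ : H →L[ℂ] H) * P) * star (↑Pu⁻¹ : H →L[ℂ] H) := by
          rw [show (↑Pu⁻¹ : H →L[ℂ] H) * P = 1 from by rw [← hPuP, Units.inv_mul], one_mul]
    _ = (↑Pu⁻¹ : H →L[ℂ] H) * (P * star (↑Pu⁻¹ : H →L[ℂ] H)) := by rw [mul_assoc]
    _ = (↑Pu⁻¹ : H →L[ℂ] H) := by rw [h1, mul_one]
  have hVstarU : star U = V := by
    rw [hU, hV, hUu, hVu]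
    show star (A * (↑Pu⁻¹ : H →L[ℂ] H)) = (↑Pu⁻¹ : H →L[ℂ] H) * star A
    rw [star_mul, hstarPinv]
  have hUunit : U ∈ unitary (H →L[ℂ] H) := by
    rw [Unitary.mem_iff, hVstarU]
    exact ⟨hVU1, hUV1⟩
  have hVunit : V ∈ unitary (H →L[ℂ] H) := by
    rw [Unitary.mem_iff]
    have hsV : star V = U := by rw [← hVstarU, star_star]
    rw [hsV]
    exact ⟨hUV1, hVU1⟩
  -- decompositions
  have hstarA : star A = P * V := by
    rw [hV, hVu]
    show star A = P * ((↑Pu⁻¹ : H →L[ℂ] H) * star A)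
    rw [← mul_assoc, ← hPuP, Units.mul_inv, one_mul]
  have hSinv : (↑S⁻¹ : H →L[ℂ] H) = (↑Pu⁻¹ : H →L[ℂ] H) * V := by
    have : S⁻¹ = Pu⁻¹ * Vu := by
      have := hVuUu
      calc S⁻¹ = (Sst * S)⁻¹ * Sst := by group
      _ = Bu⁻¹ * Sst := by rw [hBu]
      _ = (Pu * Pu)⁻¹ * Sst := by rw [hBuPu]
      _ = Pu⁻¹ * (Pu⁻¹ * Sst) := by group
      _ = Pu⁻¹ * Vu := by rw [hVu]
    rw [this, Units.val_mul, hV]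
  set Z : H →L[ℂ] H := V * X with hZ
  set W : H →L[ℂ] H := P * Z * (↑Pu⁻¹ : H →L[ℂ] H) + (↑Pu⁻¹ : H →L[ℂ] H) * Z * P with hW
  have hTW : star A * X * (↑S⁻¹ : H →L[ℂ] H) + (↑S⁻¹ : H →L[ℂ] H) * X * star A = W * V := by
    rw [hstarA, hSinv, hW, hZ]
    noncomm_ring
  have hnormT : ‖W * V‖ = ‖W‖ := CStarRing.norm_mul_mem_unitary W hVunit
  have hXZ : ‖X‖ = ‖Z‖ := by
    have hx : U * Z = X := by rw [hZ, ← mul_assoc, hUV1, one_mul]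
    rw [← hx]
    exact CStarRing.norm_mem_unitary_mul Z hUunit
  -- middle norm identity
  have hmid : ∀ t : ℝ, ∀ W' : H →L[ℂ] H, ‖E ((t:ℂ) * I) * W' * E (-((t:ℂ) * I))‖ = ‖W'‖ := by
    intro t W'
    rw [mul_assoc, CStarRing.norm_mem_unitary_mul _ (hEunit t), hEneg t,
      CStarRing.norm_mul_mem_unitary _ (hEunit (-t))]
  have hEest : ∀ σ : ℝ, |σ| ≤ 1 → ‖E ((σ:ℂ))‖ ≤ Real.exp ‖K‖ := by
    intro σ hσ
    refine (norm_exp_le_exp_norm' _).trans ?_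
    rw [Real.exp_le_exp]
    calc ‖(σ:ℂ) • K‖ = |σ| * ‖K‖ := by rw [norm_smul]; simp
    _ ≤ 1 * ‖K‖ := by gcongr
    _ = ‖K‖ := one_mul _
  -- the analytic family
  set G : ℂ → H →L[ℂ] H := fun z => E z * Z * E (-z) with hG
  have hG0 : G 0 = Z := by rw [hG]; simp [hE0]
  have hGdecomp : ∀ z : ℂ, G z = E ((z.re:ℂ)) * (E ((z.im:ℂ) * I) * Z * E (-((z.im:ℂ) * I)))
      * E (((-z.re : ℝ) : ℂ)) := by
    intro z
    rw [hG]; simp only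
    have e1 : E z = E ((z.re:ℂ)) * E ((z.im:ℂ) * I) := by
      rw [← hEadd]; congr 1; exact (Complex.re_add_im z).symm
    have e2 : E (-z) = E (-((z.im:ℂ) * I)) * E (((-z.re : ℝ) : ℂ)) := by
      rw [← hEadd]; congr 1; apply Complex.ext <;> simp
    rw [e1, e2]
    noncomm_ring
  have hGnorm : ∀ z : ℂ, |z.re| ≤ 1 → ‖G z‖ ≤ Real.exp ‖K‖ * ‖Z‖ * Real.exp ‖K‖ := by
    intro z hz
    rw [hGdecomp z]
    calc ‖E ((z.re:ℂ)) * (E ((z.im:ℂ) * I) * Z * E (-((z.im:ℂ) * I))) * E (((-z.re : ℝ) : ℂ))‖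
        ≤ ‖E ((z.re:ℂ)) * (E ((z.im:ℂ) * I) * Z * E (-((z.im:ℂ) * I)))‖ * ‖E (((-z.re : ℝ) : ℂ))‖ :=
          norm_mul_le _ _
    _ ≤ (‖E ((z.re:ℂ))‖ * ‖E ((z.im:ℂ) * I) * Z * E (-((z.im:ℂ) * I))‖) * ‖E (((-z.re : ℝ) : ℂ))‖ := by
          gcongr; exact norm_mul_le _ _
    _ = (‖E ((z.re:ℂ))‖ * ‖Z‖) * ‖E (((-z.re : ℝ) : ℂ))‖ := by rw [hmid z.im Z]
    _ ≤ (Real.exp ‖K‖ * ‖Z‖) * Real.exp ‖K‖ := by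
          gcongr
          · exact hEest _ hz
          · exact hEest _ (by rw [abs_neg]; exact hz)
    _ = Real.exp ‖K‖ * ‖Z‖ * Real.exp ‖K‖ := by ring
  have hGline : ∀ t : ℝ, G (1 + (t:ℂ) * I) + G (-1 + (t:ℂ) * I)
      = E ((t:ℂ) * I) * W * E (-((t:ℂ) * I)) := by
    intro t
    have h1 : G (1 + (t:ℂ) * I) = E ((t:ℂ)*I) * (P * Z * (↑Pu⁻¹ : H →L[ℂ] H)) * E (-((t:ℂ)*I)) := by
      rw [hG]; simp only
      rw [show (1 + (t:ℂ)*I) = (t:ℂ)*I + 1 by ring, hEadd,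
        show -((t:ℂ)*I + 1) = (-1) + -((t:ℂ)*I) by ring, hEadd, hE1, hEm1]
      noncomm_ring
    have h2 : G (-1 + (t:ℂ) * I) = E ((t:ℂ)*I) * ((↑Pu⁻¹ : H →L[ℂ] H) * Z * P) * E (-((t:ℂ)*I)) := by
      rw [hG]; simp only
      rw [show (-1 + (t:ℂ)*I) = (t:ℂ)*I + (-1) by ring, hEadd,
        show -((t:ℂ)*I + (-1)) = 1 + -((t:ℂ)*I) by ring, hEadd, hE1, hEm1]
      noncomm_ring
    rw [h1, h2, hW]
    noncomm_ring
  -- norm estimate for Z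
  have hZW : ‖Z‖ ≤ ‖W‖ / 2 := by
    refine ContinuousLinearMap.opNorm_le_bound _ (by positivity) (fun x => ?_)
    set y : H := Z x with hy
    set f : ℂ → ℂ := fun z => (inner ℂ y ((G z) x) : ℂ) with hf
    have hdiffE : Differentiable ℂ E := fun z => (hasDerivAt_exp_smul_const K z).differentiableAt
    have hdiffG : Differentiable ℂ G :=
      (hdiffE.mul_const Z).mul (hdiffE.comp differentiable_neg)
    have hdifff : Differentiable ℂ f := by
      have : f = fun z => (innerSL ℂ y) ((ContinuousLinearMap.apply ℂ H x) (G z)) := rfl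
      rw [this]
      exact (innerSL ℂ y).differentiable.comp
        ((ContinuousLinearMap.apply ℂ H x).differentiable.comp hdiffG)
    have hfC : ∀ z : ℂ, |z.re| ≤ 1 →
        ‖f z‖ ≤ ‖y‖ * (Real.exp ‖K‖ * ‖Z‖ * Real.exp ‖K‖) * ‖x‖ := by
      intro z hz
      calc ‖f z‖ ≤ ‖y‖ * ‖(G z) x‖ := norm_inner_le_norm _ _
      _ ≤ ‖y‖ * (‖G z‖ * ‖x‖) := by gcongr; exact (G z).le_opNorm x
      _ ≤ ‖y‖ * ((Real.exp ‖K‖ * ‖Z‖ * Real.exp ‖K‖) * ‖x‖) := by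
            gcongr; exact hGnorm z hz
      _ = ‖y‖ * (Real.exp ‖K‖ * ‖Z‖ * Real.exp ‖K‖) * ‖x‖ := by ring
    have hfM : ∀ t : ℝ, ‖f (1 + (t:ℂ) * I) + f (-1 + (t:ℂ) * I)‖ ≤ ‖W‖ * ‖x‖ * ‖y‖ := by
      intro t
      have : f (1 + (t:ℂ) * I) + f (-1 + (t:ℂ) * I)
          = (inner ℂ y ((G (1 + (t:ℂ)*I) + G (-1 + (t:ℂ)*I)) x) : ℂ) := by
        rw [hf]; simp only [ContinuousLinearMap.add_apply, inner_add_right]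
      rw [this, hGline t]
      calc ‖(inner ℂ y ((E ((t:ℂ)*I) * W * E (-((t:ℂ)*I))) x) : ℂ)‖
          ≤ ‖y‖ * ‖(E ((t:ℂ)*I) * W * E (-((t:ℂ)*I))) x‖ := norm_inner_le_norm _ _
      _ ≤ ‖y‖ * (‖E ((t:ℂ)*I) * W * E (-((t:ℂ)*I))‖ * ‖x‖) := by
            gcongr; exact ContinuousLinearMap.le_opNorm _ x
      _ = ‖y‖ * (‖W‖ * ‖x‖) := by rw [hmid t W]
      _ = ‖W‖ * ‖x‖ * ‖y‖ := by ring
    have hsb := strip_bound hdifff hfC hfM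
    have hf0 : f 0 = ((‖Z x‖ : ℂ)) ^ 2 := by
      rw [hf]; simp only [hG0]
      rw [hy]
      exact inner_self_eq_norm_sq_to_K (Z x)
    rw [hf0] at hsb
    have hn : ‖((‖Z x‖ : ℂ)) ^ 2‖ = ‖Z x‖ ^ 2 := by
      rw [norm_pow]; simp [Complex.norm_real, _root_.abs_of_nonneg (norm_nonneg (Z x))]
    rw [hn] at hsb
    rcases eq_or_lt_of_le (norm_nonneg (Z x)) with h0 | h0
    · rw [← h0]; positivity
    · have : ‖Z x‖ ^ 2 ≤ ‖W‖ * ‖x‖ * ‖Z x‖ / 2 := hsb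
      nlinarith
  rw [hTW, hnormT, hXZ]
  linarith
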